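/- Let ψ, φ ∈ ℝ^d be descending probability vectors with all entries strictly positive such that ψ is not majorized by φ, and let φ^∧ = ψ∧φ. Apply the recursive construction to the pair (ψ, φ), producing ratios q_1,…,q_k and indices l_1,…,l_k, and apply the same recursive construction to the pair (ψ, φ^∧), producing ratios t_1,…,t_{k'} and indices l'_1,…,l'_{k'}. Then k' = k, and t_j = q_j and l'_j = l_j for every j ∈ {1,…,k}. -/

import Mathlib

open Finset

/-- Tail-sum coherence monotone `C_l(p) = ∑_{i=l}^d p_i`, for a vector with (1-based)
entries `p 1, …, p d`.  Note `Cm d p (d+1) = 0` automatically. -/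
noncomputable def Cm (d : ℕ) (p : ℕ → ℝ) (l : ℕ) : ℝ := ∑ i ∈ Finset.Icc l d, p i

/-- `p` is a descending probability vector on the (1-based) index range `{1, …, d}`. -/
structure DescProb (d : ℕ) (p : ℕ → ℝ) : Prop where
  nonneg : ∀ i, 1 ≤ i → i ≤ d → 0 ≤ p i
  anti : ∀ i j, 1 ≤ i → i ≤ j → j ≤ d → p j ≤ p i
  sum_one : ∑ i ∈ Finset.Icc 1 d, p i = 1

/-- `p ≺ q` : `p` is majorized by `q` (both regarded as descending vectors on `{1, …, d}`). -/
def MajorizedBy (d : ℕ) (p q : ℕ → ℝ) : Prop :=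
  (∀ k, 1 ≤ k → k ≤ d → ∑ i ∈ Finset.Icc 1 k, p i ≤ ∑ i ∈ Finset.Icc 1 k, q i) ∧
    ∑ i ∈ Finset.Icc 1 d, p i = ∑ i ∈ Finset.Icc 1 d, q i

/-- The ratio `(C_l(ψ) - C_prev(ψ)) / (C_l(φ) - C_prev(φ))` appearing in the recursive
construction of the intermediate vector. -/
noncomputable def ratio (d : ℕ) (ψ φ : ℕ → ℝ) (prev l : ℕ) : ℝ :=
  (Cm d ψ l - Cm d ψ prev) / (Cm d φ l - Cm d φ prev)

/-- One step of the recursion: the minimal ratio over `l ∈ {1, …, prev - 1}`. -/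
noncomputable def stepQ (d : ℕ) (ψ φ : ℕ → ℝ) (prev : ℕ) : ℝ :=
  sInf {x : ℝ | ∃ l, 1 ≤ l ∧ l ≤ prev - 1 ∧ x = ratio d ψ φ prev l}

/-- One step of the recursion: the smallest `l ∈ {1, …, prev - 1}` attaining the minimal
ratio. -/
noncomputable def stepL (d : ℕ) (ψ φ : ℕ → ℝ) (prev : ℕ) : ℕ :=
  sInf {l : ℕ | 1 ≤ l ∧ l ≤ prev - 1 ∧ ratio d ψ φ prev l = stepQ d ψ φ prev}

/-- The sequence of indices `l_0 = d + 1 > l_1 > l_2 > ⋯` of the recursive construction. -/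
noncomputable def Lseq (d : ℕ) (ψ φ : ℕ → ℝ) : ℕ → ℕ
  | 0 => d + 1
  | j + 1 => stepL d ψ φ (Lseq d ψ φ j)

/-- The sequence of ratios `q_1 < q_2 < ⋯` of the recursive construction (`Qseq d ψ φ j`
is `q_j` for `j ≥ 1`; the value at `0` is irrelevant). -/
noncomputable def Qseq (d : ℕ) (ψ φ : ℕ → ℝ) : ℕ → ℝ
  | 0 => 1
  | j + 1 => stepQ d ψ φ (Lseq d ψ φ j)

/-- The terminating step `k` of the recursion: the first index `j` with `l_j = 1`. -/
noncomputable def kstop (d : ℕ) (ψ φ : ℕ → ℝ) : ℕ := sInf {j : ℕ | Lseq d ψ φ j = 1}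

/-- The intermediate vector `φ^f`, with `φ^f_i = q_j φ_i` for `i ∈ {l_j, …, l_{j-1} - 1}`
(for `i ∈ {1, …, d}`, the smallest `j` with `l_j ≤ i` is precisely the `j` with
`l_j ≤ i ≤ l_{j-1} - 1`). -/
noncomputable def phif (d : ℕ) (ψ φ : ℕ → ℝ) (i : ℕ) : ℝ :=
  Qseq d ψ φ (sInf {j : ℕ | Lseq d ψ φ j ≤ i}) * φ i

/-- The meet `p ∧ q` of two descending probability vectors in the majorization lattice,
defined componentwise via prefix sums (empty sums are `0`). -/
noncomputable def meet2 (p q : ℕ → ℝ) (i : ℕ) : ℝ :=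
  min (∑ j ∈ Finset.Icc 1 i, p j) (∑ j ∈ Finset.Icc 1 i, q j) -
    min (∑ j ∈ Finset.Icc 1 (i - 1), p j) (∑ j ∈ Finset.Icc 1 (i - 1), q j)

lemma Cm_eq_Ioc (d : ℕ) (p : ℕ → ℝ) (l : ℕ) (hl : 1 ≤ l) :
    Cm d p l = ∑ i ∈ Finset.Ioc (l - 1) d, p i := by
  cases l with
  | zero => omega
  | succ m => simp [Cm, Finset.Icc_add_one_left_eq_Ioc]

lemma Cm_sub (d : ℕ) (p : ℕ → ℝ) (l n : ℕ) (hl : 1 ≤ l) (hln : l ≤ n) (hn : n ≤ d + 1) :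
    Cm d p l - Cm d p n = ∑ i ∈ Finset.Ioc (l - 1) (n - 1), p i := by
  rw [Cm_eq_Ioc d p l hl, Cm_eq_Ioc d p n (le_trans hl hln)]
  have h := Finset.sum_Ioc_consecutive p (show l - 1 ≤ n - 1 by omega) (show n - 1 ≤ d by omega)
  linarith

lemma Cm_one (d : ℕ) (p : ℕ → ℝ) (hp : DescProb d p) : Cm d p 1 = 1 := hp.sum_one

lemma Cm_top (d : ℕ) (p : ℕ → ℝ) : Cm d p (d + 1) = 0 := by
  simp [Cm, Finset.Icc_eq_empty_of_lt (Nat.lt_succ_self d)]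

lemma Cm_pos_sub (d : ℕ) (p : ℕ → ℝ) (hpos : ∀ i, 1 ≤ i → i ≤ d → 0 < p i)
    (l n : ℕ) (hl : 1 ≤ l) (hln : l < n) (hn : n ≤ d + 1) :
    0 < Cm d p l - Cm d p n := by
  rw [Cm_sub d p l n hl (le_of_lt hln) hn]
  apply Finset.sum_pos
  · intro i hi
    rw [Finset.mem_Ioc] at hi
    exact hpos i (by omega) (by omega)
  · exact ⟨l, by rw [Finset.mem_Ioc]; omega⟩

lemma Cm_nonneg_sub (d : ℕ) (p : ℕ → ℝ) (hp : DescProb d p)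
    (l n : ℕ) (hl : 1 ≤ l) (hln : l ≤ n) (hn : n ≤ d + 1) :
    0 ≤ Cm d p l - Cm d p n := by
  rw [Cm_sub d p l n hl hln hn]
  apply Finset.sum_nonneg
  intro i hi
  rw [Finset.mem_Ioc] at hi
  exact hp.nonneg i (by omega) (by omega)

lemma Cm_le_one (d : ℕ) (p : ℕ → ℝ) (hp : DescProb d p) (l : ℕ)
    (hl : 1 ≤ l) (hld : l ≤ d + 1) : Cm d p l ≤ 1 := by
  have h := Cm_nonneg_sub d p hp 1 l le_rfl hl hld
  have h1 := Cm_one d p hp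
  linarith

lemma Cm_eq_prefix (d : ℕ) (p : ℕ → ℝ) (l : ℕ) (hl : 1 ≤ l) (hld : l ≤ d + 1) :
    Cm d p l = ∑ i ∈ Finset.Icc 1 d, p i - ∑ i ∈ Finset.Icc 1 (l - 1), p i := by
  rw [Cm_eq_Ioc d p l hl]
  have h := Finset.sum_Ioc_consecutive p (Nat.zero_le (l - 1)) (show l - 1 ≤ d by omega)
  have e1 : Finset.Icc 1 d = Finset.Ioc 0 d := by rw [← Finset.Icc_add_one_left_eq_Ioc]; rfl
  have e2 : Finset.Icc 1 (l - 1) = Finset.Ioc 0 (l - 1) := by rw [← Finset.Icc_add_one_left_eq_Ioc]; rfl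
  rw [e1, e2]
  linarith

lemma meet2_prefix (ψ φ : ℕ → ℝ) (m : ℕ) :
    ∑ i ∈ Finset.Icc 1 m, meet2 ψ φ i =
      min (∑ i ∈ Finset.Icc 1 m, ψ i) (∑ i ∈ Finset.Icc 1 m, φ i) := by
  induction m with
  | zero => simp
  | succ m ih =>
    rw [Finset.sum_Icc_succ_top (by omega : 1 ≤ m + 1), ih]
    simp [meet2]

lemma Cm_meet (d : ℕ) (ψ φ : ℕ → ℝ) (hψ : DescProb d ψ) (hφ : DescProb d φ)
    (l : ℕ) (hl : 1 ≤ l) (hld : l ≤ d + 1) :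
    Cm d (meet2 ψ φ) l = max (Cm d ψ l) (Cm d φ l) := by
  rw [Cm_eq_prefix d _ l hl hld, Cm_eq_prefix d ψ l hl hld, Cm_eq_prefix d φ l hl hld,
    meet2_prefix, meet2_prefix, hψ.sum_one, hφ.sum_one]
  rcases le_total (∑ i ∈ Finset.Icc 1 (l - 1), ψ i) (∑ i ∈ Finset.Icc 1 (l - 1), φ i) with h | h
  · rw [min_eq_left h, min_self, max_eq_left (by linarith)]
  · rw [min_eq_right h, min_self, max_eq_right (by linarith)]

lemma mediant {a b x y : ℝ} (hab : a ≤ b) (hb1 : b < 1) (hby : b < y)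
    (hy1 : y ≤ 1) (hyx : y ≤ x) (hs : y < x ∨ (a < b ∧ y < 1)) :
    (1 - a) / (1 - b) < (x - a) / (y - b) := by
  rw [div_lt_div_iff₀ (by linarith) (by linarith)]
  rcases hs with h | ⟨h1, h2⟩ <;> nlinarith

lemma exists_wit (d : ℕ) (ψ φ : ℕ → ℝ) (hψ : DescProb d ψ) (hφ : DescProb d φ)
    (hnm : ¬ MajorizedBy d ψ φ) :
    ∃ l₀, 2 ≤ l₀ ∧ l₀ ≤ d ∧ Cm d ψ l₀ < Cm d φ l₀ := by
  rw [MajorizedBy, not_and_or] at hnm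
  rcases hnm with h | h
  · push_neg at h
    obtain ⟨k, hk1, hkd, hk⟩ := h
    have hkd' : k < d := by
      rcases eq_or_lt_of_le hkd with rfl | h'
      · rw [hψ.sum_one, hφ.sum_one] at hk; linarith
      · exact h'
    refine ⟨k + 1, by omega, by omega, ?_⟩
    rw [Cm_eq_prefix d ψ (k+1) (by omega) (by omega),
      Cm_eq_prefix d φ (k+1) (by omega) (by omega), hψ.sum_one, hφ.sum_one]
    simp only [Nat.add_sub_cancel]
    linarith
  · exact absurd (by rw [hψ.sum_one, hφ.sum_one]) h

lemma step_main (d : ℕ) (ψ φ : ℕ → ℝ) (hψ : DescProb d ψ) (hφ : DescProb d φ)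
    (hψpos : ∀ i, 1 ≤ i → i ≤ d → 0 < ψ i) (hφpos : ∀ i, 1 ≤ i → i ≤ d → 0 < φ i)
    (hnm : ¬ MajorizedBy d ψ φ) (n : ℕ) (hn2 : 2 ≤ n) (hnd : n ≤ d + 1)
    (hcase : n = d + 1 ∨ (n ≤ d ∧ Cm d ψ n < Cm d φ n)) :
    stepQ d ψ (meet2 ψ φ) n = stepQ d ψ φ n ∧
    stepL d ψ (meet2 ψ φ) n = stepL d ψ φ n ∧
    (stepL d ψ φ n ≤ 1 ∨
      (2 ≤ stepL d ψ φ n ∧ stepL d ψ φ n ≤ d ∧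
        Cm d ψ (stepL d ψ φ n) < Cm d φ (stepL d ψ φ n))) := by
  obtain ⟨l₀, hl₀2, hl₀d, hl₀AB⟩ := exists_wit d ψ φ hψ hφ hnm
  set A : ℕ → ℝ := Cm d ψ with hA
  set B : ℕ → ℝ := Cm d φ with hB
  set M : ℕ → ℝ := Cm d (meet2 ψ φ) with hMdef
  have hAnBn : A n ≤ B n := by
    rcases hcase with rfl | ⟨_, h⟩
    · rw [hA, hB, Cm_top, Cm_top]
    · exact le_of_lt h
  have hM : ∀ l, 1 ≤ l → l ≤ d + 1 → M l = max (A l) (B l) := fun l h1 h2 =>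
    Cm_meet d ψ φ hψ hφ l h1 h2
  have hMn : M n = B n := by rw [hM n (by omega) hnd]; exact max_eq_right hAnBn
  have hA1 : A 1 = 1 := Cm_one d ψ hψ
  have hB1 : B 1 = 1 := Cm_one d φ hφ
  have hM1 : M 1 = 1 := by rw [hM 1 (by omega) (by omega), hA1, hB1, max_self]
  have hBn1 : B n < 1 := by
    have := Cm_pos_sub d φ hφpos 1 n le_rfl (by omega) hnd; rw [Cm_one d φ hφ] at this
    linarith
  -- ratios
  set r : ℕ → ℝ := ratio d ψ φ n with hr
  set r' : ℕ → ℝ := ratio d ψ (meet2 ψ φ) n with hr'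
  have hrl : ∀ l, r l = (A l - A n) / (B l - B n) := fun l => rfl
  have hrl' : ∀ l, r' l = (A l - A n) / (M l - M n) := fun l => rfl
  have hreq : ∀ l, 1 ≤ l → l ≤ d + 1 → A l ≤ B l → r' l = r l := by
    intro l h1 h2 hAB
    rw [hrl, hrl', hMn, hM l h1 h2, max_eq_right hAB]
  have hr1 : r 1 = (1 - A n) / (1 - B n) := by rw [hrl, hA1, hB1]
  -- the filtered minimum
  set F : Finset ℕ := (Finset.Icc 1 (n - 1)).filter (fun l => A l ≤ B l) with hF
  have h1F : 1 ∈ F := by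
    rw [hF, Finset.mem_filter, Finset.mem_Icc]
    exact ⟨⟨le_rfl, by omega⟩, by rw [hA1, hB1]⟩
  obtain ⟨ls, hlsF, hlsmin⟩ := Finset.exists_min_image F r ⟨1, h1F⟩
  have hlsmem : 1 ≤ ls ∧ ls ≤ n - 1 ∧ A ls ≤ B ls := by
    rw [hF, Finset.mem_filter, Finset.mem_Icc] at hlsF
    exact ⟨hlsF.1.1, hlsF.1.2, hlsF.2⟩
  set c : ℝ := r ls with hc
  have hcF : ∀ l, 1 ≤ l → l ≤ n - 1 → A l ≤ B l → c ≤ r l := by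
    intro l h1 h2 hAB
    exact hlsmin l (by rw [hF, Finset.mem_filter, Finset.mem_Icc]; exact ⟨⟨h1, h2⟩, hAB⟩)
  have hcr1 : c ≤ r 1 := hcF 1 le_rfl (by omega) (by rw [hA1, hB1])
  have hcl₀ : n = d + 1 → c < 1 := by
    intro hnd1
    have hle : c ≤ r l₀ := hcF l₀ (by omega) (by omega) (le_of_lt hl₀AB)
    have hAn0 : A n = 0 := by rw [hA, hnd1, Cm_top]
    have hBn0 : B n = 0 := by rw [hB, hnd1, Cm_top]
    have hB₀pos : 0 < B l₀ := by
      have := Cm_pos_sub d φ hφpos l₀ n (by omega) (by omega) hnd; rw [← hB, hBn0] at this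
      linarith
    have hA₀nn : 0 ≤ A l₀ := by
      have := Cm_pos_sub d ψ hψpos l₀ n (by omega) (by omega) hnd; rw [← hA, hAn0] at this
      linarith
    have : r l₀ < 1 := by
      rw [hrl, hAn0, hBn0, sub_zero, sub_zero, div_lt_one hB₀pos]; exact hl₀AB
    linarith
  -- Claim 1 : c is a strict lower bound off the region A ≤ B
  have key_r : ∀ l, 1 ≤ l → l ≤ n - 1 → c ≤ r l ∧ (B l < A l → c < r l) := by
    intro l h1 h2
    by_cases hAB : A l ≤ B l
    · exact ⟨hcF l h1 h2 hAB, fun h => absurd h (not_lt.2 hAB)⟩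
    · push_neg at hAB
      have hBl : B n < B l := by
        have := Cm_pos_sub d φ hφpos l n h1 (by omega) hnd; linarith
      have h1r : r 1 < r l := by
        rw [hr1, hrl]
        exact mediant hAnBn hBn1 hBl (Cm_le_one d φ hφ l h1 (by omega)) (le_of_lt hAB)
          (Or.inl hAB)
      exact ⟨by linarith, fun _ => by linarith⟩
  -- Claim 2 : same for r'
  have key_r' : ∀ l, 1 ≤ l → l ≤ n - 1 → c ≤ r' l ∧ (B l < A l → c < r' l) := by
    intro l h1 h2
    by_cases hAB : A l ≤ B l
    · rw [hreq l h1 (by omega) hAB]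
      exact ⟨hcF l h1 h2 hAB, fun h => absurd h (not_lt.2 hAB)⟩
    · push_neg at hAB
      have hl2 : 2 ≤ l := by
        by_contra hcon
        push_neg at hcon
        have hleq : l = 1 := by omega
        rw [hleq, hA1, hB1] at hAB
        linarith
      have hrl'' : r' l = (A l - A n) / (A l - B n) := by
        rw [hrl', hMn, hM l h1 (by omega), max_eq_left (le_of_lt hAB)]
      have hBl : B n < B l := by
        have := Cm_pos_sub d φ hφpos l n h1 (by omega) hnd; linarith
      have hstrict : c < r' l := by
        rcases hcase with hnd1 | ⟨hnle, hAnlt⟩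
        · have hAn0 : A n = 0 := by rw [hA, hnd1, Cm_top]
          have hBn0 : B n = 0 := by rw [hB, hnd1, Cm_top]
          have hApos : 0 < A l := by
            have := Cm_pos_sub d ψ hψpos l n h1 (by omega) hnd; rw [← hA, hAn0] at this
            linarith
          have : r' l = 1 := by
            rw [hrl'', hAn0, hBn0, sub_zero]
            exact div_self (ne_of_gt hApos)
          rw [this]; exact hcl₀ hnd1
        · have hAl1 : A l < 1 := by
            have := Cm_pos_sub d ψ hψpos 1 l le_rfl (by omega) (by omega)
            rw [← hA, hA1] at this; linarith
          have h1r : r 1 < r' l := by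
            rw [hr1, hrl'']
            exact mediant hAnBn hBn1 (lt_trans hBl hAB) (le_of_lt hAl1) le_rfl
              (Or.inr ⟨hAnlt, hAl1⟩)
          linarith
      exact ⟨le_of_lt hstrict, fun _ => hstrict⟩
  -- sInf computations
  have hSr : {x : ℝ | ∃ l, 1 ≤ l ∧ l ≤ n - 1 ∧ x = ratio d ψ φ n l} =
      r '' (Set.Icc 1 (n - 1)) := by
    ext x
    simp only [Set.mem_setOf_eq, Set.mem_image, Set.mem_Icc]
    constructor
    · rintro ⟨l, h1, h2, rfl⟩; exact ⟨l, ⟨h1, h2⟩, rfl⟩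
    · rintro ⟨l, ⟨h1, h2⟩, rfl⟩; exact ⟨l, h1, h2, rfl⟩
  have hSr' : {x : ℝ | ∃ l, 1 ≤ l ∧ l ≤ n - 1 ∧ x = ratio d ψ (meet2 ψ φ) n l} =
      r' '' (Set.Icc 1 (n - 1)) := by
    ext x
    simp only [Set.mem_setOf_eq, Set.mem_image, Set.mem_Icc]
    constructor
    · rintro ⟨l, h1, h2, rfl⟩; exact ⟨l, ⟨h1, h2⟩, rfl⟩
    · rintro ⟨l, ⟨h1, h2⟩, rfl⟩; exact ⟨l, h1, h2, rfl⟩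
  have hq : stepQ d ψ φ n = c := by
    rw [stepQ, hSr]
    apply le_antisymm
    · exact csInf_le ((Set.finite_Icc _ _).image r).bddBelow
        ⟨ls, Set.mem_Icc.2 ⟨hlsmem.1, hlsmem.2.1⟩, rfl⟩
    · apply le_csInf
      · exact ⟨r 1, 1, Set.mem_Icc.2 ⟨le_rfl, by omega⟩, rfl⟩
      · rintro x ⟨l, hl, rfl⟩
        rw [Set.mem_Icc] at hl
        exact (key_r l hl.1 hl.2).1
  have hq' : stepQ d ψ (meet2 ψ φ) n = c := by
    rw [stepQ, hSr']
    apply le_antisymm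
    · refine csInf_le ((Set.finite_Icc _ _).image r').bddBelow
        ⟨ls, Set.mem_Icc.2 ⟨hlsmem.1, hlsmem.2.1⟩, ?_⟩
      rw [hreq ls hlsmem.1 (by omega) hlsmem.2.2]
    · apply le_csInf
      · exact ⟨r' 1, 1, Set.mem_Icc.2 ⟨le_rfl, by omega⟩, rfl⟩
      · rintro x ⟨l, hl, rfl⟩
        rw [Set.mem_Icc] at hl
        exact (key_r' l hl.1 hl.2).1
  refine ⟨by rw [hq, hq'], ?_⟩
  -- argmin sets coincide
  have hset : {l : ℕ | 1 ≤ l ∧ l ≤ n - 1 ∧ ratio d ψ (meet2 ψ φ) n l = stepQ d ψ (meet2 ψ φ) n}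
      = {l : ℕ | 1 ≤ l ∧ l ≤ n - 1 ∧ ratio d ψ φ n l = stepQ d ψ φ n} := by
    rw [hq, hq']
    ext l
    simp only [Set.mem_setOf_eq]
    constructor
    · rintro ⟨h1, h2, h3⟩
      have hAB : A l ≤ B l := by
        by_contra h
        push_neg at h
        have := (key_r' l h1 h2).2 h
        rw [← hr'] at h3
        linarith [this, h3.le]
      refine ⟨h1, h2, ?_⟩
      rw [← hr, ← hreq l h1 (by omega) hAB]
      exact h3
    · rintro ⟨h1, h2, h3⟩
      have hAB : A l ≤ B l := by
        by_contra h
        push_neg at h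
        have := (key_r l h1 h2).2 h
        rw [← hr] at h3
        linarith [this, h3.le]
      refine ⟨h1, h2, ?_⟩
      rw [← hr', hreq l h1 (by omega) hAB]
      exact h3
  have hLeq : stepL d ψ (meet2 ψ φ) n = stepL d ψ φ n := by
    rw [stepL, stepL, hset]
  refine ⟨hLeq, ?_⟩
  -- the invariant for the new index
  have hSne : {l : ℕ | 1 ≤ l ∧ l ≤ n - 1 ∧ ratio d ψ φ n l = stepQ d ψ φ n}.Nonempty :=
    ⟨ls, hlsmem.1, hlsmem.2.1, by rw [hq]⟩
  have hmem := Nat.sInf_mem hSne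
  set l₁ : ℕ := stepL d ψ φ n with hl₁def
  obtain ⟨h11, h12, h13⟩ : 1 ≤ l₁ ∧ l₁ ≤ n - 1 ∧ ratio d ψ φ n l₁ = stepQ d ψ φ n := hmem
  rcases Nat.lt_or_ge l₁ 2 with h | hl₁2
  · exact Or.inl (by omega)
  · refine Or.inr ⟨hl₁2, by omega, ?_⟩
    have hrc : r l₁ = c := by rw [← hq]; exact h13
    have hle : A l₁ ≤ B l₁ := by
      by_contra h
      push_neg at h
      have := (key_r l₁ h11 h12).2 h
      linarith [hrc]
    rcases lt_or_eq_of_le hle with h | heq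
    · exact h
    · exfalso
      -- A l₁ = B l₁, l₁ ≥ 2 : contradiction
      have hBl : B n < B l₁ := by
        have := Cm_pos_sub d φ hφpos l₁ n h11 (by omega) hnd; linarith
      rcases hcase with hnd1 | ⟨hnle, hAnlt⟩
      · have hAn0 : A n = 0 := by rw [hA, hnd1, Cm_top]
        have hBn0 : B n = 0 := by rw [hB, hnd1, Cm_top]
        have hBpos : 0 < B l₁ := by rw [← hBn0]; exact hBl
        have : r l₁ = 1 := by
          rw [hrl, hAn0, hBn0, sub_zero, sub_zero, heq, div_self (ne_of_gt hBpos)]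
        rw [hrc] at this
        have := hcl₀ hnd1
        linarith
      · have hBl1 : B l₁ < 1 := by
          have := Cm_pos_sub d φ hφpos 1 l₁ le_rfl (by omega) (by omega)
          rw [← hB, hB1] at this; linarith
        have h1r : r 1 < r l₁ := by
          rw [hr1, hrl]
          exact mediant hAnBn hBn1 hBl (Cm_le_one d φ hφ l₁ h11 (by omega)) (le_of_eq heq.symm)
            (Or.inr ⟨hAnlt, hBl1⟩)
        rw [hrc] at h1r
        linarith

lemma step_trivial (d : ℕ) (ψ p q : ℕ → ℝ) (n : ℕ) (hn : n ≤ 1) :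
    stepQ d ψ p n = stepQ d ψ q n ∧ stepL d ψ p n = stepL d ψ q n ∧
      stepL d ψ q n = 0 := by
  have hQ : ∀ u : ℕ → ℝ,
      {x : ℝ | ∃ l, 1 ≤ l ∧ l ≤ n - 1 ∧ x = ratio d ψ u n l} = ∅ := by
    intro u
    rw [Set.eq_empty_iff_forall_notMem]
    rintro x ⟨l, h1, h2, _⟩
    omega
  have hL : ∀ u : ℕ → ℝ,
      {l : ℕ | 1 ≤ l ∧ l ≤ n - 1 ∧ ratio d ψ u n l = stepQ d ψ u n} = ∅ := by
    intro u
    rw [Set.eq_empty_iff_forall_notMem]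
    rintro l ⟨h1, h2, _⟩
    omega
  refine ⟨by rw [stepQ, stepQ, hQ, hQ], by rw [stepL, stepL, hL, hL], ?_⟩
  rw [stepL, hL, Nat.sInf_empty]


/-- If `ψ` is not majorized by `φ`, then the recursive construction for
the pair `(ψ, ψ ∧ φ)` coincides with the one for `(ψ, φ)`: the stopping indices agree,
and `t_j = q_j`, `l'_j = l_j` for every `j ∈ {1, …, k}`. -/
theorem thrifty_same_recursion (d : ℕ) (hd : 1 ≤ d) (ψ φ : ℕ → ℝ)
    (hψ : DescProb d ψ) (hφ : DescProb d φ)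
    (hψpos : ∀ i, 1 ≤ i → i ≤ d → 0 < ψ i) (hφpos : ∀ i, 1 ≤ i → i ≤ d → 0 < φ i)
    (hnm : ¬ MajorizedBy d ψ φ) :
    kstop d ψ (meet2 ψ φ) = kstop d ψ φ ∧
      ∀ j, 1 ≤ j → j ≤ kstop d ψ φ →
        Qseq d ψ (meet2 ψ φ) j = Qseq d ψ φ j ∧
          Lseq d ψ (meet2 ψ φ) j = Lseq d ψ φ j := by
  have key : ∀ j, Lseq d ψ (meet2 ψ φ) j = Lseq d ψ φ j ∧
      (Lseq d ψ φ j = d + 1 ∨ Lseq d ψ φ j ≤ 1 ∨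
        (2 ≤ Lseq d ψ φ j ∧ Lseq d ψ φ j ≤ d ∧
          Cm d ψ (Lseq d ψ φ j) < Cm d φ (Lseq d ψ φ j))) := by
    intro j
    induction j with
    | zero => exact ⟨rfl, Or.inl rfl⟩
    | succ j ih =>
      obtain ⟨hL, hInv⟩ := ih
      have hgoal1 : Lseq d ψ (meet2 ψ φ) (j + 1) = stepL d ψ (meet2 ψ φ) (Lseq d ψ φ j) := by
        rw [Lseq, hL]
      rcases hInv with h | h | h
      · have hs := step_main d ψ φ hψ hφ hψpos hφpos hnm (Lseq d ψ φ j)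
          (by omega) (by omega) (Or.inl h)
        constructor
        · rw [hgoal1, Lseq, hs.2.1]
        · rcases hs.2.2 with h' | h'
          · right; left; rw [Lseq]; omega
          · right; right; rw [Lseq]; exact h'
      · have hs := step_trivial d ψ (meet2 ψ φ) φ (Lseq d ψ φ j) h
        constructor
        · rw [hgoal1, Lseq, hs.2.1]
        · right; left; rw [Lseq]; omega
      · have hs := step_main d ψ φ hψ hφ hψpos hφpos hnm (Lseq d ψ φ j)
          h.1 (by omega) (Or.inr ⟨h.2.1, h.2.2⟩)
        constructor
        · rw [hgoal1, Lseq, hs.2.1]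
        · rcases hs.2.2 with h' | h'
          · right; left; rw [Lseq]; omega
          · right; right; rw [Lseq]; exact h'
  have keyQ : ∀ j, Qseq d ψ (meet2 ψ φ) j = Qseq d ψ φ j := by
    intro j
    cases j with
    | zero => rfl
    | succ j =>
      obtain ⟨hL, hInv⟩ := key j
      rw [Qseq, Qseq, hL]
      rcases hInv with h | h | h
      · exact (step_main d ψ φ hψ hφ hψpos hφpos hnm (Lseq d ψ φ j)
          (by omega) (by omega) (Or.inl h)).1
      · exact (step_trivial d ψ (meet2 ψ φ) φ (Lseq d ψ φ j) h).1
      · exact (step_main d ψ φ hψ hφ hψpos hφpos hnm (Lseq d ψ φ j)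
          h.1 (by omega) (Or.inr ⟨h.2.1, h.2.2⟩)).1
  have hk : kstop d ψ (meet2 ψ φ) = kstop d ψ φ := by
    rw [kstop, kstop]
    congr 1
    ext j
    simp only [Set.mem_setOf_eq, (key j).1]
  exact ⟨hk, fun j _ _ => ⟨keyQ j, (key j).1⟩⟩
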